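/- For d >= 2, every permutation in S_d can be written as a composition of exactly 2d(d-1) permutations each of which is of one of the forms: (i) the permutation obtained by swapping the first two elements and then reversing the whole sequence, (ii) for some 1 <= k <= d, the permutation obtained by cyclically rotating the sequence k steps to the right and then reversing the whole sequence, or (iii) the full reversal permutation. -/

import Mathlib

open Equiv Finset

namespace HarmoniousAux

variable {d : ℕ}

/-- The inversion set of a permutation of `Fin d`. -/
def Inv (σ : Equiv.Perm (Fin d)) : Finset (Fin d × Fin d) :=
  Finset.univ.filter fun p => p.1 < p.2 ∧ σ p.2 < σ p.1

lemma inv_card_bound (σ : Equiv.Perm (Fin d)) :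
    2 * (Inv σ).card ≤ d * d - d := by
  classical
  have hsub : Inv σ ⊆ Finset.univ.filter (fun p : Fin d × Fin d => p.1 < p.2) := by
    intro p hp
    simp only [Inv, Finset.mem_filter, Finset.mem_univ, true_and] at hp ⊢
    exact hp.1
  have hcard : (Finset.univ.filter (fun p : Fin d × Fin d => p.1 < p.2)).card
      = (Finset.univ.filter (fun p : Fin d × Fin d => p.2 < p.1)).card := by
    apply Finset.card_bij' (i := fun p _ => (p.2, p.1)) (j := fun p _ => (p.2, p.1))
    case hi =>
      intro a ha
      rw [Finset.mem_filter] at ha ⊢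
      exact ⟨Finset.mem_univ _, ha.2⟩
    case hj =>
      intro a ha
      rw [Finset.mem_filter] at ha ⊢
      exact ⟨Finset.mem_univ _, ha.2⟩
    case left_inv => intro a _; rfl
    case right_inv => intro a _; rfl
  have hdisj : Disjoint (Finset.univ.filter (fun p : Fin d × Fin d => p.1 < p.2))
      (Finset.univ.filter (fun p : Fin d × Fin d => p.2 < p.1)) := by
    rw [Finset.disjoint_left]
    intro p hp hq
    simp only [Finset.mem_filter, Finset.mem_univ, true_and] at hp hq
    exact absurd hq (not_lt.mpr hp.le)
  have hunion : (Finset.univ.filter (fun p : Fin d × Fin d => p.1 < p.2))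
      ∪ (Finset.univ.filter (fun p : Fin d × Fin d => p.2 < p.1))
      = (Finset.univ : Finset (Fin d)).offDiag := by
    ext p
    simp only [Finset.mem_union, Finset.mem_filter, Finset.mem_univ, true_and,
      Finset.mem_offDiag]
    constructor
    · rintro (h | h)
      · exact ne_of_lt h
      · exact (ne_of_lt h).symm
    · intro hne
      exact Ne.lt_or_gt hne
  have hPQ : (Finset.univ.filter (fun p : Fin d × Fin d => p.1 < p.2)).card
      + (Finset.univ.filter (fun p : Fin d × Fin d => p.2 < p.1)).card = d * d - d := by
    rw [← Finset.card_union_of_disjoint hdisj, hunion, Finset.offDiag_card,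
      Finset.card_univ, Fintype.card_fin]
  have h1 : (Inv σ).card ≤ (Finset.univ.filter (fun p : Fin d × Fin d => p.1 < p.2)).card :=
    Finset.card_le_card hsub
  omega

lemma adj_swap_lt {j j' a b : Fin d} (hjj : (j : ℕ) + 1 = (j' : ℕ))
    (hab : a < b) (hne : ¬(a = j ∧ b = j')) :
    Equiv.swap j j' a < Equiv.swap j j' b := by
  rw [Equiv.swap_apply_def, Equiv.swap_apply_def]
  simp only [Fin.ext_iff, Fin.lt_def] at *
  split_ifs <;> omega

lemma inv_step (σ : Equiv.Perm (Fin d)) {j j' : Fin d} (hjj : (j : ℕ) + 1 = (j' : ℕ))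
    (hinv : σ j' < σ j) :
    (Inv (σ * Equiv.swap j j')).card + 1 = (Inv σ).card := by
  classical
  set s := Equiv.swap j j' with hs
  have hjlt : j < j' := by rw [Fin.lt_def]; omega
  have hmem : (j, j') ∈ Inv σ := by
    simp only [Inv, Finset.mem_filter, Finset.mem_univ, true_and]
    exact ⟨hjlt, hinv⟩
  have hbij : (Inv (σ * s)).card = (Inv σ \ {(j, j')}).card := by
    apply Finset.card_bij' (i := fun p _ => (s p.1, s p.2)) (j := fun p _ => (s p.1, s p.2))
    case hi =>
      intro p hp
      simp only [Inv, Finset.mem_filter, Finset.mem_univ, true_and] at hp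
      simp only [Equiv.Perm.mul_apply] at hp
      have hpne : ¬(p.1 = j ∧ p.2 = j') := by
        rintro ⟨h1, h2⟩
        rw [h1, h2] at hp
        rw [hs, Equiv.swap_apply_left, Equiv.swap_apply_right] at hp
        exact absurd hp.2 (not_lt.mpr hinv.le)
      have hlt : s p.1 < s p.2 := adj_swap_lt hjj hp.1 hpne
      simp only [Finset.mem_sdiff, Inv, Finset.mem_filter, Finset.mem_univ, true_and,
        Finset.mem_singleton]
      refine ⟨⟨hlt, hp.2⟩, ?_⟩
      intro hcon
      have h1 : s p.1 = j := congrArg Prod.fst hcon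
      have h2 : s p.2 = j' := congrArg Prod.snd hcon
      have e1 : p.1 = j' := by
        have := congrArg s h1
        rwa [hs, Equiv.swap_apply_self, Equiv.swap_apply_left] at this
      have e2 : p.2 = j := by
        have := congrArg s h2
        rwa [hs, Equiv.swap_apply_self, Equiv.swap_apply_right] at this
      rw [e1, e2] at hp
      exact absurd hp.1 (not_lt.mpr hjlt.le)
    case hj =>
      intro p hp
      simp only [Finset.mem_sdiff, Inv, Finset.mem_filter, Finset.mem_univ, true_and,
        Finset.mem_singleton] at hp
      have hpne : ¬(p.1 = j ∧ p.2 = j') := by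
        rintro ⟨h1, h2⟩
        exact hp.2 (Prod.ext h1 h2)
      have hlt : s p.1 < s p.2 := adj_swap_lt hjj hp.1.1 hpne
      simp only [Inv, Finset.mem_filter, Finset.mem_univ, true_and]
      simp only [Equiv.Perm.mul_apply]
      refine ⟨hlt, ?_⟩
      rw [hs, Equiv.swap_apply_self, Equiv.swap_apply_self]
      exact hp.1.2
    case left_inv =>
      intro p _
      simp [hs, Equiv.swap_apply_self]
    case right_inv =>
      intro p _
      simp [hs, Equiv.swap_apply_self]
  have hsdiff : (Inv σ \ {(j, j')}).card = (Inv σ).card - 1 := by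
    rw [Finset.card_sdiff_of_subset (Finset.singleton_subset_iff.mpr hmem), Finset.card_singleton]
  have hpos : 1 ≤ (Inv σ).card := Finset.card_pos.mpr ⟨_, hmem⟩
  omega

lemma exists_adj_list :
    ∀ (k : ℕ) (σ : Equiv.Perm (Fin d)), (Inv σ).card = k →
    ∃ L : List (Equiv.Perm (Fin d)),
      L.length = (Inv σ).card ∧
      (∀ x ∈ L, ∃ (j : ℕ) (h : j + 1 < d),
        x = Equiv.swap ⟨j, by omega⟩ ⟨j + 1, h⟩) ∧
      L.prod = σ := by
  intro k
  induction k using Nat.strong_induction_on with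
  | _ k ih =>
    intro σ hk
    by_cases hid : ∃ (j : ℕ) (h : j + 1 < d), σ ⟨j + 1, h⟩ < σ ⟨j, by omega⟩
    · obtain ⟨j, h, hlt⟩ := hid
      set jf : Fin d := ⟨j, by omega⟩ with hjf
      set jf' : Fin d := ⟨j + 1, h⟩ with hjf'
      have hjj : (jf : ℕ) + 1 = (jf' : ℕ) := rfl
      have hstep := inv_step σ hjj hlt
      set τ := σ * Equiv.swap jf jf' with hτ
      have hkτ : (Inv τ).card = k - 1 := by omega
      have hklt : k - 1 < k := by omega
      obtain ⟨L, hlen, hmemL, hprod⟩ := ih (k - 1) hklt τ hkτ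
      refine ⟨L ++ [Equiv.swap jf jf'], ?_, ?_, ?_⟩
      · rw [List.length_append, hlen, hkτ, List.length_singleton]
        omega
      · intro x hx
        rcases List.mem_append.mp hx with h' | h'
        · exact hmemL x h'
        · rw [List.mem_singleton] at h'
          exact ⟨j, h, h'⟩
      · rw [List.prod_append, List.prod_singleton, hprod, hτ, mul_assoc,
          Equiv.swap_mul_self, mul_one]
    · push_neg at hid
      have hadj : ∀ (j : ℕ) (h : j + 1 < d), σ ⟨j, by omega⟩ < σ ⟨j + 1, h⟩ := by
        intro j h
        have h1 := hid j h
        have h2 : σ ⟨j, by omega⟩ ≠ σ ⟨j + 1, h⟩ := by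
          intro hcon
          have := σ.injective hcon
          simp [Fin.ext_iff] at this
        exact lt_of_le_of_ne h1 h2
      have hmono : StrictMono σ := by
        intro a b hab
        have key : ∀ (m : ℕ) (hm : m < d) (a : Fin d), (a : ℕ) < m →
            σ a < σ ⟨m, hm⟩ := by
          intro m
          induction m with
          | zero => intro _ _ h0; omega
          | succ m ihm =>
            intro hm a ha
            rcases Nat.lt_or_ge (a : ℕ) m with h' | h'
            · exact lt_trans (ihm (by omega) a h') (hadj m hm)
            · have hameq : (a : ℕ) = m := by omega
              have haeq : a = ⟨m, by omega⟩ := Fin.ext hameq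
              rw [haeq]
              exact hadj m hm
        have := key (b : ℕ) b.isLt a hab
        simpa using this
      have hmono' : StrictMono (σ⁻¹ : Equiv.Perm (Fin d)) := by
        intro a b hab
        rcases lt_trichotomy (σ⁻¹ a) (σ⁻¹ b) with h' | h' | h'
        · exact h'
        · exact absurd (congrArg σ h') (by simp [ne_of_lt hab])
        · have := hmono h'
          simp only [Equiv.Perm.inv_def, Equiv.apply_symm_apply] at this
          exact absurd this (not_lt.mpr hab.le)
      have hle : ∀ i : Fin d, i ≤ σ i := by
        have key : ∀ (m : ℕ) (i : Fin d), (i : ℕ) = m → (i : ℕ) ≤ (σ i : ℕ) := by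
          intro m
          induction m with
          | zero => intro i hi; omega
          | succ m ihm =>
            intro i hi
            have hm : m < d := by omega
            have hlt' : (⟨m, hm⟩ : Fin d) < i := by
              rw [Fin.lt_def]
              show m < (i : ℕ)
              omega
            have h1 : m ≤ (σ (⟨m, hm⟩ : Fin d) : ℕ) := ihm ⟨m, hm⟩ rfl
            have h2 : (σ (⟨m, hm⟩ : Fin d) : ℕ) < (σ i : ℕ) := hmono hlt'
            omega
        intro i
        rw [Fin.le_def]
        exact key (i : ℕ) i rfl
      have hle' : ∀ i : Fin d, i ≤ σ⁻¹ i := by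
        intro i
        rw [Fin.le_def]
        have key : ∀ (m : ℕ) (i : Fin d), (i : ℕ) = m → (i : ℕ) ≤ ((σ⁻¹ : Equiv.Perm (Fin d)) i : ℕ) := by
          intro m
          induction m with
          | zero => intro i hi; omega
          | succ m ihm =>
            intro i hi
            have hm : m < d := by omega
            have hlt' : (⟨m, hm⟩ : Fin d) < i := by
              rw [Fin.lt_def]
              show m < (i : ℕ)
              omega
            have h1 : m ≤ ((σ⁻¹ : Equiv.Perm (Fin d)) (⟨m, hm⟩ : Fin d) : ℕ) := ihm ⟨m, hm⟩ rfl
            have h2 : ((σ⁻¹ : Equiv.Perm (Fin d)) (⟨m, hm⟩ : Fin d) : ℕ)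
                < ((σ⁻¹ : Equiv.Perm (Fin d)) i : ℕ) := hmono' hlt'
            omega
        exact key (i : ℕ) i rfl
      have hσ1 : σ = 1 := by
        ext i
        have h1 := hle i
        have h2 := hle' (σ i)
        simp only [Equiv.Perm.inv_def, Equiv.symm_apply_apply] at h2
        have := le_antisymm h2 (h1)
        simp [Fin.ext_iff] at this ⊢
        omega
      have hInv : Inv σ = ∅ := by
        rw [hσ1]
        ext p
        simp only [Inv, Finset.mem_filter, Finset.mem_univ, true_and,
          Finset.notMem_empty, iff_false]
        rintro ⟨h1, h2⟩
        simp only [Equiv.Perm.one_apply] at h2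
        exact absurd h2 (not_lt.mpr h1.le)
      exact ⟨[], by simp [hInv], by simp, by simp [hσ1]⟩

open Fin.NatCast in
lemma rot_pow_apply (n m : ℕ) (x : Fin (n + 2)) :
    ((finRotate (n + 2)) ^ m) x = x + (m : Fin (n + 2)) := by
  induction m with
  | zero => simp
  | succ m ih =>
    rw [pow_succ', Equiv.Perm.mul_apply, ih, finRotate_succ_apply, Nat.cast_add,
      Nat.cast_one, add_assoc]

open Fin.NatCast in
lemma rot_pow_card (n : ℕ) : (finRotate (n + 2)) ^ (n + 2) = 1 := by
  ext x
  rw [rot_pow_apply]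
  simp [Fin.natCast_self]

lemma rot_pow_reduce (n m : ℕ) :
    (finRotate (n + 2)) ^ m = (finRotate (n + 2)) ^ (m % (n + 2)) := by
  conv_lhs => rw [← Nat.div_add_mod m (n + 2)]
  rw [pow_add, pow_mul, rot_pow_card, one_pow, one_mul]

lemma exists_k_inv (n m : ℕ) :
    ∃ k : ℕ, 1 ≤ k ∧ k ≤ n + 2 ∧
      ((finRotate (n + 2))⁻¹) ^ k = ((finRotate (n + 2)) ^ m)⁻¹ := by
  by_cases h : m % (n + 2) = 0
  · refine ⟨n + 2, by omega, le_refl _, ?_⟩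
    rw [inv_pow, rot_pow_card, rot_pow_reduce n m, h, pow_zero, inv_one]
  · refine ⟨m % (n + 2), by omega, le_of_lt (Nat.mod_lt m (by omega)), ?_⟩
    rw [inv_pow, rot_pow_reduce n m]

lemma exists_k_pos (n m : ℕ) :
    ∃ k : ℕ, 1 ≤ k ∧ k ≤ n + 2 ∧
      ((finRotate (n + 2))⁻¹) ^ k = (finRotate (n + 2)) ^ m := by
  have hmod : m % (n + 2) < n + 2 := Nat.mod_lt m (by omega)
  refine ⟨(n + 2) - m % (n + 2), by omega, by omega, ?_⟩
  rw [inv_pow]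
  have hmul : (finRotate (n + 2)) ^ ((n + 2) - m % (n + 2)) * (finRotate (n + 2)) ^ m = 1 := by
    rw [rot_pow_reduce n m, ← pow_add]
    have : (n + 2) - m % (n + 2) + m % (n + 2) = n + 2 := by omega
    rw [this, rot_pow_card]
  exact inv_eq_of_mul_eq_one_right hmul

/-- The predicate defining allowed generator permutations. -/
def Good (n : ℕ) (x : Equiv.Perm (Fin (n + 2))) : Prop :=
  x = Equiv.swap (0 : Fin (n + 2)) 1 * Fin.revPerm ∨
    (∃ k : ℕ, 1 ≤ k ∧ k ≤ n + 2 ∧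
      x = ((finRotate (n + 2))⁻¹) ^ k * Fin.revPerm) ∨
    x = Fin.revPerm

lemma rev_mul_rev (n : ℕ) : (Fin.revPerm : Equiv.Perm (Fin (n + 2))) * Fin.revPerm = 1 := by
  ext x
  simp [Equiv.Perm.mul_apply, Fin.rev_rev]

lemma rev_inv (n : ℕ) : (Fin.revPerm : Equiv.Perm (Fin (n + 2)))⁻¹ = Fin.revPerm :=
  inv_eq_of_mul_eq_one_right (rev_mul_rev n)

open Fin.NatCast in
lemma swap_decomp (n : ℕ) (j : ℕ) (h : j + 1 < n + 2) :
    ∃ M : List (Equiv.Perm (Fin (n + 2))),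
      M.length = 4 ∧ (∀ g ∈ M, Good n g) ∧
      M.prod = Equiv.swap (⟨j, by omega⟩ : Fin (n + 2)) ⟨j + 1, h⟩ := by
  obtain ⟨k1, hk11, hk12, hk1⟩ := exists_k_pos n (j + 2)
  obtain ⟨k3, hk31, hk32, hk3⟩ := exists_k_inv n (j + 2)
  set ρ : Equiv.Perm (Fin (n + 2)) := finRotate (n + 2) with hρ
  set r : Equiv.Perm (Fin (n + 2)) := Fin.revPerm with hr
  set s0 : Equiv.Perm (Fin (n + 2)) := Equiv.swap 0 1 with hs0
  refine ⟨[(ρ⁻¹) ^ k1 * r, s0 * r, (ρ⁻¹) ^ k3 * r, r], rfl, ?_, ?_⟩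
  · intro g hg
    simp only [List.mem_cons, List.not_mem_nil, or_false] at hg
    rcases hg with hg | hg | hg | hg
    · exact Or.inr (Or.inl ⟨k1, hk11, hk12, hg⟩)
    · exact Or.inl hg
    · exact Or.inr (Or.inl ⟨k3, hk31, hk32, hg⟩)
    · exact Or.inr (Or.inr hg)
  · have hrr := rev_mul_rev n
    have hri := rev_inv n
    have e1 : Equiv.swap (r 0) (r 1) = r * s0 * r⁻¹ :=
      Equiv.swap_apply_apply r 0 1
    have e2 : Equiv.swap ((ρ ^ (j + 2)) (r 0)) ((ρ ^ (j + 2)) (r 1)) =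
        ρ ^ (j + 2) * Equiv.swap (r 0) (r 1) * (ρ ^ (j + 2))⁻¹ :=
      Equiv.swap_apply_apply _ _ _
    have v1 : (ρ ^ (j + 2)) (r 0) = (⟨j + 1, h⟩ : Fin (n + 2)) := by
      rw [hρ, rot_pow_apply]
      apply Fin.ext
      have hval : (r (0 : Fin (n + 2)) : ℕ) = n + 1 := by
        simp [hr, Fin.val_rev]
      rw [Fin.val_add, hval, Fin.val_natCast]
      rcases Nat.lt_or_ge (j + 2) (n + 2) with hl | hl
      · rw [Nat.mod_eq_of_lt hl]
        have heq : n + 1 + (j + 2) = (j + 1) + (n + 2) := by omega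
        rw [heq, Nat.add_mod_right, Nat.mod_eq_of_lt (by omega)]
      · have hje : j + 2 = n + 2 := by omega
        rw [hje, Nat.mod_self, Nat.add_zero, Nat.mod_eq_of_lt (by omega)]
        show n + 1 = j + 1
        omega
    have v2 : (ρ ^ (j + 2)) (r 1) = (⟨j, by omega⟩ : Fin (n + 2)) := by
      rw [hρ, rot_pow_apply]
      apply Fin.ext
      have hval : (r (1 : Fin (n + 2)) : ℕ) = n := by
        simp [hr, Fin.val_rev]
      rw [Fin.val_add, hval, Fin.val_natCast]
      rcases Nat.lt_or_ge (j + 2) (n + 2) with hl | hl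
      · rw [Nat.mod_eq_of_lt hl]
        have heq : n + (j + 2) = j + (n + 2) := by omega
        rw [heq, Nat.add_mod_right, Nat.mod_eq_of_lt (by omega)]
      · have hje : j + 2 = n + 2 := by omega
        rw [hje, Nat.mod_self, Nat.add_zero, Nat.mod_eq_of_lt (by omega)]
        show n = j
        omega
    rw [List.prod_cons, List.prod_cons, List.prod_cons, List.prod_singleton]
    rw [hk1, hk3]
    have hassoc : ρ ^ (j + 2) * r * (s0 * r * ((ρ ^ (j + 2))⁻¹ * r * r)) =
        ρ ^ (j + 2) * (r * s0 * r⁻¹) * (ρ ^ (j + 2))⁻¹ * (r * r) := by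
      rw [hri]
      simp only [mul_assoc]
      rfl
    rw [hassoc, hrr, mul_one, ← e1, ← e2, v1, v2, Equiv.swap_comm]

lemma glue {α : Type*} [Monoid α] (P : α → Prop) :
    ∀ L : List α, (∀ x ∈ L, ∃ M : List α, M.length = 4 ∧ (∀ g ∈ M, P g) ∧ M.prod = x) →
    ∃ N : List α, N.length = 4 * L.length ∧ (∀ g ∈ N, P g) ∧ N.prod = L.prod := by
  intro L
  induction L with
  | nil => intro _; exact ⟨[], by simp, by simp, by simp⟩
  | cons x L ih =>
    intro hL
    obtain ⟨M, hM1, hM2, hM3⟩ := hL x List.mem_cons_self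
    obtain ⟨N, hN1, hN2, hN3⟩ := ih (fun y hy => hL y (List.mem_cons_of_mem x hy))
    refine ⟨M ++ N, ?_, ?_, ?_⟩
    · rw [List.length_append, hM1, hN1, List.length_cons]; ring
    · intro g hg
      rcases List.mem_append.mp hg with h' | h'
      · exact hM2 g h'
      · exact hN2 g h'
    · rw [List.prod_append, hM3, hN3, List.prod_cons]

lemma replicate_rev_prod (n : ℕ) :
    ∀ m : ℕ, (List.replicate (2 * m) (Fin.revPerm : Equiv.Perm (Fin (n + 2)))).prod = 1 := by
  intro m
  induction m with
  | zero => simp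
  | succ m ih =>
    have h2 : 2 * (m + 1) = 2 * m + 1 + 1 := by omega
    rw [h2, List.replicate_succ, List.replicate_succ, List.prod_cons, List.prod_cons,
      ← mul_assoc, rev_mul_rev, one_mul, ih]

end HarmoniousAux

/-- For `d ≥ 2` (here `d = n + 2`), every permutation in `S_d` can be written as a
composition of exactly `2d(d-1)` permutations, each of one of the following forms
(where a permutation `σ` is identified with the value sequence `(σ 0, ..., σ (d-1))`):
(i) the permutation obtained by swapping the first two elements of the identity
sequence and then reversing the whole sequence, i.e. `Equiv.swap 0 1 * Fin.revPerm`;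
(ii) for some `1 ≤ k ≤ d`, the permutation obtained by cyclically rotating the identity
sequence `k` steps to the right and then reversing the whole sequence, i.e.
`((finRotate d)⁻¹) ^ k * Fin.revPerm`; or (iii) the full reversal `Fin.revPerm`. -/
theorem harmonious_generators_compose (n : ℕ) :
    ∀ σ : Equiv.Perm (Fin (n + 2)),
      ∃ L : List (Equiv.Perm (Fin (n + 2))),
        L.length = 2 * (n + 2) * (n + 1) ∧
        (∀ x ∈ L,
          x = Equiv.swap (0 : Fin (n + 2)) 1 * Fin.revPerm ∨
          (∃ k : ℕ, 1 ≤ k ∧ k ≤ n + 2 ∧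
            x = ((finRotate (n + 2))⁻¹) ^ k * Fin.revPerm) ∨
          x = Fin.revPerm) ∧
        L.prod = σ := by
  intro σ
  classical
  obtain ⟨L, hlen, hmem, hprod⟩ :=
    HarmoniousAux.exists_adj_list (HarmoniousAux.Inv σ).card σ rfl
  set t := (HarmoniousAux.Inv σ).card with ht
  have hbound : 2 * t ≤ (n + 2) * (n + 1) := by
    have h1 := HarmoniousAux.inv_card_bound σ
    have h2 : (n + 2) * (n + 1) + (n + 2) = (n + 2) * (n + 2) := by ring
    omega
  have hglue : ∀ x ∈ L, ∃ M : List (Equiv.Perm (Fin (n + 2))),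
      M.length = 4 ∧ (∀ g ∈ M, HarmoniousAux.Good n g) ∧ M.prod = x := by
    intro x hx
    obtain ⟨j, h, hx'⟩ := hmem x hx
    obtain ⟨M, hM1, hM2, hM3⟩ := HarmoniousAux.swap_decomp n j h
    exact ⟨M, hM1, hM2, by rw [hM3, hx']⟩
  obtain ⟨N, hN1, hN2, hN3⟩ := HarmoniousAux.glue _ L hglue
  refine ⟨N ++ List.replicate (2 * ((n + 2) * (n + 1) - 2 * t)) Fin.revPerm, ?_, ?_, ?_⟩
  · rw [List.length_append, List.length_replicate, hN1, hlen]
    have h3 : 2 * (n + 2) * (n + 1) = 2 * ((n + 2) * (n + 1)) := by ring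
    omega
  · intro x hx
    rcases List.mem_append.mp hx with h' | h'
    · exact hN2 x h'
    · have := List.eq_of_mem_replicate h'
      exact Or.inr (Or.inr this)
  · rw [List.prod_append, HarmoniousAux.replicate_rev_prod, mul_one, hN3, hprod]
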